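/- arXiv:2407.06408 — 2 statements merged into one kernel-verified Lean document; each statement's English description precedes it below -/
import Mathlib

section
/- Suppose strict feasibility fails for the nonempty spectrahedron F = {X ⪰ 0 : A(X) = b} but strong duality holds for the best approximation problem min{½‖X − W‖² : X ∈ F}, and let λ be any solution of the auxiliary system. Then the solution set S = {y ∈ ℝᵐ : F(y) = 0} of the dual equation F(y) = A(P_{Sⁿ₊}(W + A*(y))) − b is unbounded; more precisely, for every ȳ ∈ S and every t ∈ ℝ₊ one has F(ȳ − tλ) = 0, so {ȳ − tλ : t ≥ 0} ⊆ S. -/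
open Matrix Set

noncomputable section

/-- Squared Frobenius norm via the trace inner product. -/
def frobSq {k : ℕ} (M : Matrix (Fin k) (Fin k) ℝ) : ℝ := (Mᵀ * M).trace

/-- `P` is a nearest point to `X` in `C` (Frobenius norm). -/
def IsProjOn {k : ℕ} (C : Set (Matrix (Fin k) (Fin k) ℝ))
    (X P : Matrix (Fin k) (Fin k) ℝ) : Prop :=
  P ∈ C ∧ ∀ Y ∈ C, frobSq (X - P) ≤ frobSq (X - Y)

/-- The linear map `A X = (⟨Aᵢ, X⟩)ᵢ` (trace inner product). -/
def calA {n m : ℕ} (A : Fin m → Matrix (Fin n) (Fin n) ℝ)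
    (X : Matrix (Fin n) (Fin n) ℝ) : Fin m → ℝ := fun i => (A i * X).trace

/-- The adjoint map `A* λ = ∑ᵢ λᵢ Aᵢ`. -/
def adjA {n m : ℕ} (A : Fin m → Matrix (Fin n) (Fin n) ℝ) (lam : Fin m → ℝ) :
    Matrix (Fin n) (Fin n) ℝ := ∑ i, lam i • A i

/-- The spectrahedron `F = {X ⪰ 0 : A X = b}`. -/
def spectra {n m : ℕ} (A : Fin m → Matrix (Fin n) (Fin n) ℝ) (b : Fin m → ℝ) :
    Set (Matrix (Fin n) (Fin n) ℝ) := {X | X.PosSemidef ∧ calA A X = b}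

/-- The dual residual map `F(y) = A(P_{Sⁿ₊}(W + A*y)) − b`, where `Pp` is the
nearest-point projection onto `Sⁿ₊`. -/
def Fmap {n m : ℕ} (A : Fin m → Matrix (Fin n) (Fin n) ℝ) (b : Fin m → ℝ)
    (W : Matrix (Fin n) (Fin n) ℝ)
    (Pp : Matrix (Fin n) (Fin n) ℝ → Matrix (Fin n) (Fin n) ℝ)
    (y : Fin m → ℝ) : Fin m → ℝ :=
  calA A (Pp (W + adjA A y)) - b

/-! ### Auxiliary lemmas -/

lemma frobSq_eq_sum {k : ℕ} (M : Matrix (Fin k) (Fin k) ℝ) :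
    frobSq M = ∑ i, ∑ j, (M j i) ^ 2 := by
  simp [frobSq, Matrix.trace, Matrix.mul_apply, Matrix.diag, sq]

lemma frobSq_nonneg {k : ℕ} (M : Matrix (Fin k) (Fin k) ℝ) : 0 ≤ frobSq M := by
  rw [frobSq_eq_sum]
  positivity

lemma frobSq_eq_zero {k : ℕ} {M : Matrix (Fin k) (Fin k) ℝ} (h : frobSq M ≤ 0) : M = 0 := by
  rw [frobSq_eq_sum] at h
  ext i j
  have h2 : ∑ i : Fin k, ∑ j : Fin k, (M j i)^2 = 0 :=
    le_antisymm h (by positivity)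
  have := (Finset.sum_eq_zero_iff_of_nonneg (fun i _ => by positivity)).mp h2 j (Finset.mem_univ _)
  have := (Finset.sum_eq_zero_iff_of_nonneg (fun j _ => by positivity)).mp this i (Finset.mem_univ _)
  simpa using pow_eq_zero_iff (n := 2) (by norm_num) |>.mp this

lemma trace_tmul_comm {k : ℕ} (u v : Matrix (Fin k) (Fin k) ℝ) :
    (vᵀ * u).trace = (uᵀ * v).trace := by
  rw [← Matrix.trace_transpose (vᵀ * u), Matrix.transpose_mul, Matrix.transpose_transpose]

lemma frobSq_sub {k : ℕ} (u v : Matrix (Fin k) (Fin k) ℝ) :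
    frobSq (u - v) = frobSq u - 2 * (uᵀ * v).trace + frobSq v := by
  simp only [frobSq, Matrix.transpose_sub, Matrix.sub_mul, Matrix.mul_sub, Matrix.trace_sub]
  rw [trace_tmul_comm u v]
  ring

lemma psd_smul {k : ℕ} {P : Matrix (Fin k) (Fin k) ℝ} (hP : P.PosSemidef)
    {t : ℝ} (ht : 0 ≤ t) : (t • P).PosSemidef := by
  rw [Matrix.posSemidef_iff_dotProduct_mulVec]
  refine ⟨?_, fun x => ?_⟩
  · simpa [Matrix.IsHermitian, Matrix.conjTranspose_smul] using congrArg (t • ·) hP.1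
  · rw [Matrix.smul_mulVec, dotProduct_smul, smul_eq_mul]
    exact mul_nonneg ht (hP.dotProduct_mulVec_nonneg x)

lemma psd_diag_nonneg {k : ℕ} {M : Matrix (Fin k) (Fin k) ℝ} (hM : M.PosSemidef)
    (i : Fin k) : 0 ≤ M i i := by
  have := hM.dotProduct_mulVec_nonneg (Pi.single i 1)
  simpa [Matrix.mulVec_single, dotProduct, Pi.single_apply] using this

lemma psd_trace_nonneg {k : ℕ} {M : Matrix (Fin k) (Fin k) ℝ} (hM : M.PosSemidef) :
    0 ≤ M.trace :=
  Finset.sum_nonneg fun i _ => psd_diag_nonneg hM i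

open scoped MatrixOrder in
lemma trace_psd_mul_nonneg {k : ℕ} {Z Y : Matrix (Fin k) (Fin k) ℝ}
    (hZ : Z.PosSemidef) (hY : Y.PosSemidef) : 0 ≤ (Z * Y).trace := by
  have hS : (CFC.sqrt Z).PosSemidef := (CFC.sqrt_nonneg Z).posSemidef
  have hSS : CFC.sqrt Z * CFC.sqrt Z = Z := CFC.sqrt_mul_sqrt_self Z hZ.nonneg
  have h1 : (Z * Y).trace = (CFC.sqrt Z * Y * CFC.sqrt Z).trace := by
    conv_lhs => rw [← hSS]
    rw [Matrix.mul_assoc, Matrix.trace_mul_comm]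
  rw [h1]
  have hconj : (CFC.sqrt Z * Y * (CFC.sqrt Z)ᴴ).PosSemidef := hY.mul_mul_conjTranspose_same _
  rw [hS.1] at hconj
  exact psd_trace_nonneg hconj

lemma frobSq_smul {k : ℕ} (t : ℝ) (v : Matrix (Fin k) (Fin k) ℝ) :
    frobSq (t • v) = t ^ 2 * frobSq v := by
  simp [frobSq, Matrix.transpose_smul, Matrix.smul_mul, Matrix.mul_smul, smul_smul, sq]

lemma proj_varineq {k : ℕ} {M P : Matrix (Fin k) (Fin k) ℝ}
    (hP : IsProjOn {Y : Matrix (Fin k) (Fin k) ℝ | Y.PosSemidef} M P)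
    {Y : Matrix (Fin k) (Fin k) ℝ} (hY : Y.PosSemidef) :
    ((M - P)ᵀ * (Y - P)).trace ≤ 0 := by
  set c := ((M - P)ᵀ * (Y - P)).trace with hc_def
  set d := frobSq (Y - P) with hd_def
  have hd : 0 ≤ d := frobSq_nonneg _
  have key : ∀ t : ℝ, 0 ≤ t → t ≤ 1 → 2 * t * c ≤ t ^ 2 * d := by
    intro t ht0 ht1
    have hYt : (P + t • (Y - P)).PosSemidef := by
      have heq : P + t • (Y - P) = (1 - t) • P + t • Y := by module
      rw [heq]
      exact (psd_smul hP.1 (by linarith)).add (psd_smul hY ht0)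
    have hmin := hP.2 _ hYt
    have hexp : frobSq (M - (P + t • (Y - P)))
        = frobSq (M - P) - 2 * (t * c) + t ^ 2 * d := by
      have : M - (P + t • (Y - P)) = (M - P) - t • (Y - P) := by abel
      rw [this, frobSq_sub, frobSq_smul, Matrix.mul_smul, Matrix.trace_smul]
      simp [hc_def, hd_def]
    rw [hexp] at hmin
    linarith
  by_contra hc
  push_neg at hc
  set t := min 1 (c / (d + 1)) with ht_def
  have ht0 : 0 < t := lt_min one_pos (div_pos hc (by linarith))
  have ht1 : t ≤ 1 := min_le_left _ _
  have h2 : t * (d + 1) ≤ c := by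
    rw [← le_div_iff₀ (by linarith)]
    exact min_le_right _ _
  have := key t ht0.le ht1
  nlinarith [mul_pos ht0 hc, sq_nonneg t, mul_le_mul_of_nonneg_left h2 ht0.le]

lemma proj_unique_shift {k : ℕ} {M P Z : Matrix (Fin k) (Fin k) ℝ} {t : ℝ} (ht : 0 ≤ t)
    (hP : IsProjOn {Y : Matrix (Fin k) (Fin k) ℝ | Y.PosSemidef} M P)
    (hZ : Z.PosSemidef) (hZsymm : Z.IsSymm) (hZP : (Z * P).trace = 0)
    {Q : Matrix (Fin k) (Fin k) ℝ}
    (hQ : IsProjOn {Y : Matrix (Fin k) (Fin k) ℝ | Y.PosSemidef} (M - t • Z) Q) :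
    Q = P := by
  have hvar : ∀ Y : Matrix (Fin k) (Fin k) ℝ, Y.PosSemidef →
      (((M - t • Z) - P)ᵀ * (Y - P)).trace ≤ 0 := by
    intro Y hY
    have h1 : ((M - t • Z) - P) = (M - P) - t • Z := by abel
    rw [h1, Matrix.transpose_sub, Matrix.sub_mul, Matrix.trace_sub]
    have h2 : ((M - P)ᵀ * (Y - P)).trace ≤ 0 := proj_varineq hP hY
    have h3 : 0 ≤ ((t • Z)ᵀ * (Y - P)).trace := by
      rw [Matrix.transpose_smul, Matrix.smul_mul, Matrix.trace_smul, hZsymm.eq,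
        Matrix.mul_sub, Matrix.trace_sub, hZP, sub_zero, smul_eq_mul]
      exact mul_nonneg ht (trace_psd_mul_nonneg hZ hY)
    linarith
  have hexp : frobSq ((M - t • Z) - Q)
      = frobSq ((M - t • Z) - P) - 2 * (((M - t • Z) - P)ᵀ * (Q - P)).trace
        + frobSq (Q - P) := by
    have h1 : (M - t • Z) - Q = ((M - t • Z) - P) - (Q - P) := by abel
    rw [h1, frobSq_sub]
  have hmin := hQ.2 P hP.1
  have hvarQ := hvar Q hQ.1
  have h0 : frobSq (Q - P) ≤ 0 := by linarith
  have h1 : Q - P = 0 := frobSq_eq_zero h0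
  linear_combination (norm := abel) h1

lemma adjA_sub_smul {n m : ℕ} (A : Fin m → Matrix (Fin n) (Fin n) ℝ)
    (y lam : Fin m → ℝ) (t : ℝ) :
    adjA A (y - t • lam) = adjA A y - t • adjA A lam := by
  simp [adjA, sub_smul, smul_smul, Finset.sum_sub_distrib, Finset.smul_sum]

/-- if strict feasibility fails for the nonempty spectrahedron `F` but
strong duality holds (the dual equation `F(y) = 0` has a root), and `λ` solves the
auxiliary system, then the solution set `S = {y : F(y) = 0}` is unbounded; more precisely
`F(ȳ − tλ) = 0` for every root `ȳ` and every `t ≥ 0`. -/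
theorem stmt16 {n m : ℕ} (A : Fin m → Matrix (Fin n) (Fin n) ℝ)
    (hA : ∀ i, (A i).IsSymm) (hLI : LinearIndependent ℝ A) (b : Fin m → ℝ)
    (hFne : (spectra A b).Nonempty)
    (hnostrict : ¬ ∃ X : Matrix (Fin n) (Fin n) ℝ, X.PosDef ∧ calA A X = b)
    (W : Matrix (Fin n) (Fin n) ℝ) (hW : W.IsSymm)
    (Pp : Matrix (Fin n) (Fin n) ℝ → Matrix (Fin n) (Fin n) ℝ)
    (hPp : ∀ M, IsProjOn {Y : Matrix (Fin n) (Fin n) ℝ | Y.PosSemidef} M (Pp M))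
    (hstrong : ∃ y : Fin m → ℝ, Fmap A b W Pp y = 0)
    (lam : Fin m → ℝ) (hlam0 : adjA A lam ≠ 0)
    (hlampsd : (adjA A lam).PosSemidef) (hblam : ∑ i, b i * lam i = 0) :
    ¬ Bornology.IsBounded {y : Fin m → ℝ | Fmap A b W Pp y = 0} ∧
    ∀ ybar : Fin m → ℝ, Fmap A b W Pp ybar = 0 →
      ∀ t : ℝ, 0 ≤ t → Fmap A b W Pp (ybar - t • lam) = 0 := by
  set Z := adjA A lam with hZ_def
  have hZsymm : Z.IsSymm := by
    unfold Matrix.IsSymm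
    rw [hZ_def, adjA, Matrix.transpose_sum]
    exact Finset.sum_congr rfl fun i _ => by rw [Matrix.transpose_smul, (hA i).eq]
  -- Part 2 first
  have part2 : ∀ ybar : Fin m → ℝ, Fmap A b W Pp ybar = 0 →
      ∀ t : ℝ, 0 ≤ t → Fmap A b W Pp (ybar - t • lam) = 0 := by
    intro ybar hybar t ht
    set M := W + adjA A ybar with hM_def
    set P := Pp M with hP_def
    have hFP : calA A P = b := by
      have : calA A P - b = 0 := hybar
      exact sub_eq_zero.mp this
    have hZP : (Z * P).trace = 0 := by
      rw [hZ_def, adjA, Matrix.sum_mul, Matrix.trace_sum]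
      have : ∀ i ∈ Finset.univ, ((lam i • A i) * P).trace = lam i * b i := by
        intro i _
        rw [Matrix.smul_mul, Matrix.trace_smul, smul_eq_mul]
        congr 1
        exact congrFun hFP i
      rw [Finset.sum_congr rfl this]
      rw [← hblam]
      exact Finset.sum_congr rfl fun i _ => mul_comm _ _
    have harg : W + adjA A (ybar - t • lam) = M - t • Z := by
      rw [adjA_sub_smul, hM_def, hZ_def]
      abel
    have hQeq : Pp (M - t • Z) = P := by
      exact proj_unique_shift ht (hPp M) hlampsd hZsymm hZP (hPp (M - t • Z))
    show calA A (Pp (W + adjA A (ybar - t • lam))) - b = 0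
    rw [harg, hQeq, hFP, sub_self]
  refine ⟨?_, part2⟩
  -- unboundedness
  intro hbdd
  obtain ⟨C, hC⟩ := isBounded_iff_forall_norm_le.mp hbdd
  obtain ⟨ybar, hybar⟩ := hstrong
  have hlamne : lam ≠ 0 := by
    intro h
    apply hlam0
    simp [hZ_def, adjA, h]
  obtain ⟨i, hi⟩ := Function.ne_iff.mp hlamne
  have hi' : (0:ℝ) < |lam i| := abs_pos.mpr hi
  have hC0 : 0 ≤ C := le_trans (norm_nonneg ybar) (hC ybar hybar)
  set t := (C + |ybar i| + 1) / |lam i| with ht_def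
  have ht0 : 0 ≤ t := by positivity
  have hmem := part2 ybar hybar t ht0
  have hnorm := hC _ hmem
  have hxi : |ybar i - t * lam i| ≤ ‖ybar - t • lam‖ := by
    have := norm_le_pi_norm (ybar - t • lam) i
    simpa [Real.norm_eq_abs] using this
  have htl : t * |lam i| = C + |ybar i| + 1 := div_mul_cancel₀ _ (ne_of_gt hi')
  have h1 : t * |lam i| - |ybar i| ≤ |ybar i - t * lam i| := by
    have h2 : |t * lam i| - |ybar i| ≤ |t * lam i - ybar i| := abs_sub_abs_le_abs_sub _ _
    rw [abs_sub_comm] at h2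
    calc t * |lam i| - |ybar i| = |t * lam i| - |ybar i| := by
          rw [abs_mul, abs_of_nonneg ht0]
      _ ≤ |ybar i - t * lam i| := h2
  linarith
end
end

section
/- Let X̄ be the optimal solution of the best approximation problem min{½‖X − W‖² : X ∈ F}, and suppose the KKT conditions hold at X̄ with multipliers (ȳ, Z̄) satisfying strict complementarity, so that W + A*(ȳ) = [V V̄]·blkdiag(R, −S)·[V V̄]ᵀ with [V V̄] orthogonal, R ≻ 0, S ≻ 0, X̄ = V R Vᵀ and Z̄ = V̄ S V̄ᵀ. For j = 1, …, m set T_j = [[VᵀA_jV, B ∘ (VᵀA_jV̄)], [(B ∘ (VᵀA_jV̄))ᵀ, 0]], where B is the matrix with entries B_{kl} = λ_k/(λ_k − μ_l), λ_k the (positive) eigenvalues of R and μ_l the (negative) eigenvalues of −S appearing in the decomposition, and let J ∈ ℝᵐˣᵐ be the matrix with entries J_{ij} = ⟨ [[VᵀA_iV, VᵀA_iV̄],[V̄ᵀA_iV, 0]], T_j ⟩ (this J is the Jacobian of F(y) = A(P_{Sⁿ₊}(W + A*(y))) − b at ȳ). Then X̄ is a degenerate point of F if and only if J is singular; equivalently,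 X̄ is nondegenerate if and only if J is nonsingular. -/
open Matrix Set

noncomputable section

/-- at an optimal solution `X̄` of the best approximation problem where the
KKT conditions hold with strict complementarity, writing
`W + A*ȳ = [V V̄]·blkdiag(R, −S)·[V V̄]ᵀ` with `R = Diag ρ ≻ 0`, `S = Diag σ ≻ 0`,
`X̄ = V R Vᵀ`, `Z̄ = V̄ S V̄ᵀ`, and defining `B`, `T_j` and the Jacobian matrix `J` as in
the statement, `X̄` is degenerate iff `J` is singular; equivalently `X̄` is nondegenerate
iff `J` is nonsingular.  (Degeneracy of `X̄` is expressed through the linear independence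
of the matrices `Mᵢ = [[VᵀAᵢV, VᵀAᵢV̄],[V̄ᵀAᵢV, 0]]`.) -/
theorem stmt19 {n m r s : ℕ} (hrs : r + s = n)
    (A : Fin m → Matrix (Fin n) (Fin n) ℝ)
    (hA : ∀ i, (A i).IsSymm) (hLI : LinearIndependent ℝ A) (b : Fin m → ℝ)
    (W : Matrix (Fin n) (Fin n) ℝ) (hW : W.IsSymm)
    (Xbar Zbar : Matrix (Fin n) (Fin n) ℝ) (ybar : Fin m → ℝ)
    -- `X̄` is the optimal solution of the best approximation problem
    (hopt : Xbar ∈ spectra A b ∧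
      ∀ Y ∈ spectra A b, frobSq (Xbar - W) ≤ frobSq (Y - W))
    -- the KKT conditions at `X̄` with multipliers `(ȳ, Z̄)`
    (hKKTdual : Xbar - W - adjA A ybar - Zbar = 0)
    (hKKTZ : Zbar.PosSemidef)
    (hKKTcs : (Zbar * Xbar).trace = 0)
    -- strict complementarity
    (hsc : Xbar.rank + Zbar.rank = n)
    -- the orthogonal decomposition `W + A*ȳ = [V V̄]·blkdiag(R, −S)·[V V̄]ᵀ`
    (V : Matrix (Fin n) (Fin r) ℝ) (Vbar : Matrix (Fin n) (Fin s) ℝ)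
    (hVV : Vᵀ * V = 1) (hVbVb : Vbarᵀ * Vbar = 1) (hVVb : Vᵀ * Vbar = 0)
    (hcomplete : V * Vᵀ + Vbar * Vbarᵀ = 1)
    (ρ : Fin r → ℝ) (hρ : ∀ k, 0 < ρ k) (σ : Fin s → ℝ) (hσ : ∀ l, 0 < σ l)
    (hXbar : Xbar = V * Matrix.diagonal ρ * Vᵀ)
    (hZbar : Zbar = Vbar * Matrix.diagonal σ * Vbarᵀ)
    -- the matrix `B` with entries `B_{kl} = λ_k/(λ_k − μ_l)`, `λ_k = ρ k`, `μ_l = −σ l`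
    (B : Matrix (Fin r) (Fin s) ℝ) (hB : ∀ k l, B k l = ρ k / (ρ k - (-(σ l))))
    -- the matrices `T_j`
    (T : Fin m → Matrix (Fin r ⊕ Fin s) (Fin r ⊕ Fin s) ℝ)
    (hT : ∀ j, T j = Matrix.fromBlocks (Vᵀ * A j * V)
        (Matrix.hadamard B (Vᵀ * A j * Vbar))
        (Matrix.hadamard B (Vᵀ * A j * Vbar))ᵀ 0)
    -- the matrices `Mᵢ` appearing in the degeneracy characterization
    (M : Fin m → Matrix (Fin r ⊕ Fin s) (Fin r ⊕ Fin s) ℝ)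
    (hM : ∀ i, M i = Matrix.fromBlocks (Vᵀ * A i * V) (Vᵀ * A i * Vbar)
        (Vbarᵀ * A i * V) 0)
    -- the Jacobian matrix `J` with entries `J_{ij} = ⟨Mᵢ, T_j⟩`
    (J : Matrix (Fin m) (Fin m) ℝ) (hJ : ∀ i j, J i j = (M i * T j).trace) :
    (¬ LinearIndependent ℝ M ↔ J.det = 0) ∧
      (LinearIndependent ℝ M ↔ J.det ≠ 0) := by
  classical
  have hAs : ∀ i, (A i)ᵀ = A i := hA
  have hBpos : ∀ k l, 0 < B k l := by
    intro k l
    rw [hB, sub_neg_eq_add]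
    have h1 := hρ k; have h2 := hσ l
    positivity
  set w : (Fin r ⊕ Fin s) → (Fin r ⊕ Fin s) → ℝ := fun p q =>
    match p, q with
    | Sum.inl _, Sum.inl _ => 1
    | Sum.inl k, Sum.inr l => B k l
    | Sum.inr l, Sum.inl k => B k l
    | Sum.inr _, Sum.inr _ => 1 with hw
  have hw_pos : ∀ p q, 0 < w p q := by
    rintro (k | l) (k' | l') <;> simp [hw] <;> exact hBpos _ _
  have hw_symm : ∀ p q, w q p = w p q := by
    rintro (k | l) (k' | l') <;> simp [hw]
  have hQT : ∀ i, Vbarᵀ * A i * V = (Vᵀ * A i * Vbar)ᵀ := by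
    intro i
    rw [Matrix.transpose_mul, Matrix.transpose_mul, Matrix.transpose_transpose, hAs,
      Matrix.mul_assoc]
  have hPT : ∀ i, (Vᵀ * A i * V)ᵀ = Vᵀ * A i * V := by
    intro i
    rw [Matrix.transpose_mul, Matrix.transpose_mul, Matrix.transpose_transpose, hAs,
      Matrix.mul_assoc]
  have hMsymm : ∀ i p q, M i q p = M i p q := by
    intro i p q
    have h1 : (M i)ᵀ = M i := by
      rw [hM i, hQT i, Matrix.fromBlocks_transpose, hPT i, Matrix.transpose_transpose,
        Matrix.transpose_zero]
    calc M i q p = (M i)ᵀ p q := rfl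
      _ = M i p q := by rw [h1]
  have hTM : ∀ j p q, T j p q = w p q * M j p q := by
    intro j p q
    rcases p with k | l <;> rcases q with k' | l'
    · rw [hT j, hM j]; simp [hw, Matrix.fromBlocks]
    · rw [hT j, hM j]; simp [hw, Matrix.fromBlocks, Matrix.hadamard]
    · rw [hT j, hM j, hQT j]
      simp only [Matrix.fromBlocks_apply₂₁, Matrix.transpose_apply, Matrix.hadamard_apply, hw]
    · rw [hT j, hM j]; simp [hw, Matrix.fromBlocks]
  have hJ' : ∀ i j, J i j = ∑ p, ∑ q, w p q * (M i p q * M j p q) := by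
    intro i j
    rw [hJ i j, Matrix.trace]
    refine Finset.sum_congr rfl fun p _ => ?_
    rw [Matrix.diag_apply, Matrix.mul_apply]
    refine Finset.sum_congr rfl fun q _ => ?_
    rw [hTM j q p, hw_symm, hMsymm j q p]
    ring
  have sumswap : ∀ (f : Fin m → (Fin r ⊕ Fin s) → (Fin r ⊕ Fin s) → ℝ),
      (∑ j, ∑ p, ∑ q, f j p q) = ∑ p, ∑ q, ∑ j, f j p q := by
    intro f
    rw [Finset.sum_comm]
    exact Finset.sum_congr rfl fun p _ => Finset.sum_comm
  have hNapp : ∀ (c : Fin m → ℝ) p q, (∑ j, c j • M j) p q = ∑ j, c j * M j p q := by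
    intro c p q
    simp [Matrix.sum_apply]
  have hmv : ∀ (c : Fin m → ℝ) i,
      J.mulVec c i = ∑ p, ∑ q, w p q * (M i p q * (∑ j, c j • M j) p q) := by
    intro c i
    have : J.mulVec c i = ∑ j, ∑ p, ∑ q, (w p q * (M i p q * M j p q)) * c j := by
      rw [Matrix.mulVec, dotProduct]
      refine Finset.sum_congr rfl fun j _ => ?_
      rw [hJ' i j, Finset.sum_mul]
      exact Finset.sum_congr rfl fun p _ => (Finset.sum_mul _ _ _)
    rw [this, sumswap]
    refine Finset.sum_congr rfl fun p _ => Finset.sum_congr rfl fun q _ => ?_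
    rw [hNapp, Finset.mul_sum, Finset.mul_sum]
    exact Finset.sum_congr rfl fun j _ => by ring
  have key : ∀ c : Fin m → ℝ, J.mulVec c = 0 ↔ ∑ j, c j • M j = 0 := by
    intro c
    constructor
    · intro h
      set N := ∑ j, c j • M j with hN
      have h0 : ∑ p, ∑ q, w p q * (N p q * N p q) = 0 := by
        have h1 : ∑ i, c i * J.mulVec c i = 0 := by
          rw [h]; simp
        have h2 : ∑ i, c i * J.mulVec c i
            = ∑ p, ∑ q, w p q * (N p q * N p q) := by
          have h3 : ∑ i, c i * J.mulVec c i
              = ∑ i, ∑ p, ∑ q, (w p q * (N p q * M i p q)) * c i := by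
            refine Finset.sum_congr rfl fun i _ => ?_
            rw [hmv c i, ← hN, Finset.mul_sum]
            refine Finset.sum_congr rfl fun p _ => ?_
            rw [Finset.mul_sum]
            exact Finset.sum_congr rfl fun q _ => by ring
          rw [h3, sumswap]
          refine Finset.sum_congr rfl fun p _ => Finset.sum_congr rfl fun q _ => ?_
          have : ∑ i, (w p q * (N p q * M i p q)) * c i
              = w p q * (N p q * ∑ i, c i * M i p q) := by
            rw [Finset.mul_sum, Finset.mul_sum]
            exact Finset.sum_congr rfl fun i _ => by ring
          rw [this, ← hNapp c p q, ← hN]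
        rw [← h2, h1]
      have hterm : ∀ p q, w p q * (N p q * N p q) = 0 := by
        have houter := (Finset.sum_eq_zero_iff_of_nonneg (fun p _ =>
          Finset.sum_nonneg fun q _ => mul_nonneg (hw_pos p q).le (mul_self_nonneg _))).mp h0
        intro p q
        have hinner := (Finset.sum_eq_zero_iff_of_nonneg (fun q _ =>
          mul_nonneg (hw_pos p q).le (mul_self_nonneg _))).mp (houter p (Finset.mem_univ p))
        exact hinner q (Finset.mem_univ q)
      ext p q
      have := hterm p q
      have hz : N p q * N p q = 0 := by
        rcases mul_eq_zero.mp this with h' | h'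
        · exact absurd h' (hw_pos p q).ne'
        · exact h'
      have := mul_self_eq_zero.mp hz
      simpa using this
    · intro h
      funext i
      rw [hmv c i, h]
      simp
  refine ⟨⟨?_, ?_⟩, ?_, ?_⟩
  · intro hnli
    obtain ⟨g, hg0, i0, hgne⟩ := Fintype.not_linearIndependent_iff.mp hnli
    rw [← Matrix.exists_mulVec_eq_zero_iff]
    exact ⟨g, fun h => hgne (congrFun h i0), (key g).mpr hg0⟩
  · intro hdet hli
    obtain ⟨c, hc0, hmvc⟩ := Matrix.exists_mulVec_eq_zero_iff.mpr hdet
    exact hc0 (funext (Fintype.linearIndependent_iff.mp hli c ((key c).mp hmvc)))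
  · intro hli hdet
    obtain ⟨c, hc0, hmvc⟩ := Matrix.exists_mulVec_eq_zero_iff.mpr hdet
    exact hc0 (funext (Fintype.linearIndependent_iff.mp hli c ((key c).mp hmvc)))
  · intro hdet
    by_contra hnli
    obtain ⟨g, hg0, i0, hgne⟩ := Fintype.not_linearIndependent_iff.mp hnli
    exact hdet (Matrix.exists_mulVec_eq_zero_iff.mp
      ⟨g, fun h => hgne (congrFun h i0), (key g).mpr hg0⟩)
end
end
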